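/- Let n ≥ 2, k ≥ 1, m ≥ 0, and let S_1, …, S_n ⊆ S be action sets. Let (x_i^ng)_{i=1}^n be any nominal greedy profile and (x_i^ag, z_i^ag)_{i=1}^n be any augmented greedy profile for (f, (S_i), k, m). Then f(x_1^ag ∪ … ∪ x_n^ag) ≤ (2 + min(m/k, n−1)) · f(x_1^ng ∪ … ∪ x_n^ng). -/

import Mathlib

open Finset

variable {α : Type*}

/-- `f` is monotone on finsets. -/
def IsMonotoneFn (f : Finset α → ℝ) : Prop := ∀ A B : Finset α, A ⊆ B → f A ≤ f B

/-- `f` is submodular. -/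
def IsSubmodularFn [DecidableEq α] (f : Finset α → ℝ) : Prop :=
  ∀ A B : Finset α, A ⊆ B → ∀ s ∉ B, f (insert s A) - f A ≥ f (insert s B) - f B

/-- Marginal contribution Δ(A|B) = f(A ∪ B) − f(B). -/
def marg [DecidableEq α] (f : Finset α → ℝ) (A B : Finset α) : ℝ := f (A ∪ B) - f B

/-- Δ^l(A|B): best marginal of a subset of `A` of size at most `l`. -/
noncomputable def margSup [DecidableEq α] (f : Finset α → ℝ) (l : ℕ) (A B : Finset α) : ℝ :=
  (A.powerset.filter (fun C => C.card ≤ l)).sup' ⟨∅, by simp⟩ (fun C => marg f C B)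

/-- Union of the first `i` sets: x_0 ∪ ⋯ ∪ x_{i-1}. -/
def pref [DecidableEq α] (x : ℕ → Finset α) (i : ℕ) : Finset α := (Finset.range i).biUnion x

/-- A nominal greedy profile. -/
def NomGreedy [DecidableEq α] (f : Finset α → ℝ) (Ss : ℕ → Finset α) (k n : ℕ)
    (x : ℕ → Finset α) : Prop :=
  ∀ i < n, x i ⊆ Ss i ∧ (x i).card ≤ k ∧
    ∀ c : Finset α, c ⊆ Ss i → c.card ≤ k → f (c ∪ pref x i) ≤ f (x i ∪ pref x i)

/-- An augmented greedy profile. -/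
def AugGreedy [DecidableEq α] (f : Finset α → ℝ) (Ss : ℕ → Finset α) (k m n : ℕ)
    (x z : ℕ → Finset α) : Prop :=
  ∀ i < n,
    (x i ⊆ Ss i ∪ pref z i ∧ (x i).card ≤ k ∧
      ∀ c : Finset α, c ⊆ Ss i ∪ pref z i → c.card ≤ k →
        f (c ∪ pref x i) ≤ f (x i ∪ pref x i)) ∧
    ∃ zk zr : Finset α,
      z i = zk ∪ zr ∧ zk ⊆ Ss i ∧ zk.card ≤ min k m ∧
      (∀ w : Finset α, w ⊆ Ss i → w.card ≤ min k m →
        marg f w (pref x (i + 1)) ≤ marg f zk (pref x (i + 1))) ∧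
      zr ⊆ Ss i ∧ zr.card ≤ m - k

/-- The optimal value OPT(f, (S_i), k) over feasible profiles with n agents. -/
noncomputable def OPTval [DecidableEq α] [Fintype α] (f : Finset α → ℝ) (Ss : ℕ → Finset α)
    (n k : ℕ) : ℝ :=
  ((Finset.univ : Finset (Fin n → Finset α)).filter
      (fun y => ∀ i : Fin n, y i ⊆ Ss (i : ℕ) ∧ (y i).card ≤ k)).sup'
    ⟨(fun _ => ∅), by simp⟩ (fun y => f (Finset.univ.biUnion (fun i => y i)))


section Helpers
set_option linter.unusedSectionVars false
variable [DecidableEq α] {f : Finset α → ℝ}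



lemma marg_nonneg (hmono : IsMonotoneFn f) (A B : Finset α) : 0 ≤ marg f A B := by
  have := hmono B (A ∪ B) subset_union_right
  simp [marg]; linarith

lemma marg_mono_left (hmono : IsMonotoneFn f) {X Y : Finset α} (h : X ⊆ Y) (B : Finset α) :
    marg f X B ≤ marg f Y B := by
  have := hmono (X ∪ B) (Y ∪ B) (union_subset_union_left h)
  simp [marg]; linarith

/-- S1: marginals shrink as the base grows. -/
lemma marg_antitone (hmono : IsMonotoneFn f) (hsub : IsSubmodularFn f)
    (C : Finset α) : ∀ {A B : Finset α}, A ⊆ B → marg f C B ≤ marg f C A := by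
  induction C using Finset.induction_on with
  | empty => intro A B _; simp [marg]
  | insert s C hs ih =>
    intro A B hAB
    have h1 : marg f (insert s C) B = (f (insert s (C ∪ B)) - f (C ∪ B)) + marg f C B := by
      simp only [marg, insert_union]; ring
    have h2 : marg f (insert s C) A = (f (insert s (C ∪ A)) - f (C ∪ A)) + marg f C A := by
      simp only [marg, insert_union]; ring
    have hsubset : C ∪ A ⊆ C ∪ B := union_subset_union_right hAB
    have hins : f (insert s (C ∪ B)) - f (C ∪ B) ≤ f (insert s (C ∪ A)) - f (C ∪ A) := by
      by_cases hmem : s ∈ C ∪ B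
      · rw [insert_eq_self.mpr hmem]
        have := hmono (C ∪ A) (insert s (C ∪ A)) (subset_insert _ _)
        linarith
      · exact hsub (C ∪ A) (C ∪ B) hsubset s hmem
    have := ih hAB
    linarith

/-- S2 -/
lemma marg_union_le (hmono : IsMonotoneFn f) (hsub : IsSubmodularFn f)
    (X Y B : Finset α) : marg f (X ∪ Y) B ≤ marg f X B + marg f Y B := by
  have h1 : marg f (X ∪ Y) B = marg f X (Y ∪ B) + marg f Y B := by
    simp only [marg, union_assoc]; ring
  have h2 : marg f X (Y ∪ B) ≤ marg f X B := marg_antitone hmono hsub X subset_union_right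
  linarith

/-- S3 -/
lemma marg_le_sum (hmono : IsMonotoneFn f) (hsub : IsSubmodularFn f)
    (C B : Finset α) : marg f C B ≤ ∑ s ∈ C, marg f {s} B := by
  induction C using Finset.induction_on with
  | empty => simp [marg]
  | insert s C hs ih =>
    rw [Finset.sum_insert hs]
    have : marg f (insert s C) B ≤ marg f {s} B + marg f C B := by
      have := marg_union_le hmono hsub {s} C B
      simpa [← insert_eq] using this
    linarith

/-- S5 -/
lemma sum_erase_marg (hmono : IsMonotoneFn f) (hsub : IsSubmodularFn f) (P : Finset α) :
    ∀ x : Finset α, ∑ t ∈ x, (f (x ∪ P) - f ((x.erase t) ∪ P)) ≤ marg f x P := by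
  intro x
  induction x using Finset.induction_on with
  | empty => simp [marg]
  | insert u y hs ih =>
    rw [Finset.sum_insert hs]
    have h0 : (insert u y).erase u = y := erase_insert hs
    have hterm : ∀ t ∈ y, f (insert u y ∪ P) - f ((insert u y).erase t ∪ P)
        ≤ f (y ∪ P) - f (y.erase t ∪ P) := by
      intro t ht
      have htu : t ≠ u := by rintro rfl; exact hs ht
      have hins : (insert u y).erase t = insert u (y.erase t) := by
        rw [erase_insert_of_ne htu.symm]
      have e1 : f (insert u y ∪ P) - f ((insert u y).erase t ∪ P)
          = marg f {t} ((insert u y).erase t ∪ P) := by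
        have : {t} ∪ ((insert u y).erase t ∪ P) = insert u y ∪ P := by
          rw [← union_assoc, ← insert_eq, insert_erase (mem_insert_of_mem ht)]
        simp only [marg, this]
      have e2 : f (y ∪ P) - f (y.erase t ∪ P) = marg f {t} (y.erase t ∪ P) := by
        have : {t} ∪ (y.erase t ∪ P) = y ∪ P := by
          rw [← union_assoc, ← insert_eq, insert_erase ht]
        simp only [marg, this]
      rw [e1, e2, hins]
      exact marg_antitone hmono hsub {t}
        (union_subset_union_left (subset_insert _ _))
    calc (f (insert u y ∪ P) - f ((insert u y).erase u ∪ P))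
          + ∑ t ∈ y, (f (insert u y ∪ P) - f ((insert u y).erase t ∪ P))
        ≤ (f (insert u y ∪ P) - f (y ∪ P))
          + ∑ t ∈ y, (f (y ∪ P) - f (y.erase t ∪ P)) := by
          rw [h0]; exact add_le_add le_rfl (Finset.sum_le_sum hterm)
      _ ≤ (f (insert u y ∪ P) - f (y ∪ P)) + marg f y P := add_le_add le_rfl ih
      _ = marg f (insert u y) P := by simp only [marg, insert_union]; ring

/-- L1 -/
lemma key_singleton (hmono : IsMonotoneFn f) (hsub : IsSubmodularFn f) {S P x : Finset α}
    {k : ℕ} (hk : 1 ≤ k) (hxS : x ⊆ S) (hxk : x.card ≤ k)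
    (hopt : ∀ c : Finset α, c ⊆ S → c.card ≤ k → f (c ∪ P) ≤ f (x ∪ P))
    {s : α} (hs : s ∈ S) :
    (k : ℝ) * marg f {s} (x ∪ P) ≤ marg f x P := by
  have hmargx : 0 ≤ marg f x P := marg_nonneg hmono x P
  rcases lt_or_eq_of_le hxk with hlt | heq
  · -- card x < k : marginal of s is nonpositive
    have hnonpos : marg f {s} (x ∪ P) ≤ 0 := by
      have hco : (insert s x).card ≤ k := le_trans (card_insert_le _ _) hlt
      have := hopt (insert s x) (insert_subset hs hxS) hco
      have he : {s} ∪ (x ∪ P) = insert s x ∪ P := by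
        rw [← union_assoc, ← insert_eq]
      simp only [marg, he]
      linarith
    nlinarith [Nat.one_le_cast (α := ℝ) |>.mpr hk]
  · -- card x = k
    have hpt : ∀ t ∈ x, marg f {s} (x ∪ P) ≤ f (x ∪ P) - f (x.erase t ∪ P) := by
      intro t ht
      have h1 : marg f {s} (x ∪ P) ≤ marg f {s} (x.erase t ∪ P) :=
        marg_antitone hmono hsub {s} (union_subset_union_left (erase_subset _ _))
      have hcard : (insert s (x.erase t)).card ≤ k := by
        have := card_insert_le s (x.erase t)
        have := card_erase_of_mem ht
        omega
      have h2 : f (insert s (x.erase t) ∪ P) ≤ f (x ∪ P) :=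
        hopt _ (insert_subset hs ((erase_subset _ _).trans hxS)) hcard
      have he : {s} ∪ (x.erase t ∪ P) = insert s (x.erase t) ∪ P := by
        rw [← union_assoc, ← insert_eq]
      calc marg f {s} (x ∪ P) ≤ marg f {s} (x.erase t ∪ P) := h1
        _ = f (insert s (x.erase t) ∪ P) - f (x.erase t ∪ P) := by simp only [marg, he]
        _ ≤ f (x ∪ P) - f (x.erase t ∪ P) := by linarith
    have hsum : ∑ t ∈ x, marg f {s} (x ∪ P) ≤ ∑ t ∈ x, (f (x ∪ P) - f (x.erase t ∪ P)) :=
      Finset.sum_le_sum hpt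
    rw [Finset.sum_const, heq] at hsum
    have := sum_erase_marg hmono hsub P x
    have hns : (k : ℝ) * marg f {s} (x ∪ P) = (k • marg f {s} (x ∪ P) : ℝ) := by
      simp [nsmul_eq_mul]
    linarith [hsum, this, hns.le, hns.ge]

lemma pref_succ (x : ℕ → Finset α) (i : ℕ) : pref x (i + 1) = x i ∪ pref x i := by
  simp [pref, Finset.range_add_one]

lemma pref_mono (x : ℕ → Finset α) {i j : ℕ} (h : i ≤ j) : pref x i ⊆ pref x j :=
  biUnion_subset_biUnion_of_subset_left x (Finset.range_subset_range.mpr h)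

lemma pref_subset_pref {x y : ℕ → Finset α} (h : ∀ i, x i ⊆ y i) (i : ℕ) :
    pref x i ⊆ pref y i := by
  intro s hs
  rcases Finset.mem_biUnion.mp hs with ⟨j, hj, hsj⟩
  exact Finset.mem_biUnion.mpr ⟨j, hj, h j hsj⟩

lemma subset_pref (x : ℕ → Finset α) {j i : ℕ} (h : j < i) : x j ⊆ pref x i := by
  intro s hs
  exact Finset.mem_biUnion.mpr ⟨j, Finset.mem_range.mpr h, hs⟩

/-- telescoping with a base set -/
lemma telescope (f : Finset α → ℝ) (x : ℕ → Finset α) (B : Finset α) (n : ℕ) :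
    f (B ∪ pref x n) = f B + ∑ i ∈ Finset.range n, marg f (x i) (B ∪ pref x i) := by
  induction n with
  | zero => simp [pref]
  | succ n ih =>
    rw [Finset.sum_range_succ, ← add_assoc, ← ih]
    have he : B ∪ pref x (n + 1) = x n ∪ (B ∪ pref x n) := by
      rw [pref_succ]; ac_rfl
    simp only [marg, he]; ring

end Helpers

/-- Theorem 2, upper bound -/
theorem stmt3 [DecidableEq α] [Fintype α] (f : Finset α → ℝ)
    (hnorm : f ∅ = 0) (hmono : IsMonotoneFn f) (hsub : IsSubmodularFn f)
    (n k m : ℕ) (hn : 2 ≤ n) (hk : 1 ≤ k) (Ss : ℕ → Finset α)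
    (xng : ℕ → Finset α) (hng : NomGreedy f Ss k n xng)
    (xag zag : ℕ → Finset α) (hag : AugGreedy f Ss k m n xag zag) :
    f (pref xag n) ≤ (2 + min ((m : ℝ) / k) ((n : ℝ) - 1)) * f (pref xng n) := by
  classical
  set N : Finset α := pref xng n with hNdef
  set δ : ℕ → ℝ := fun j => marg f (xng j) (pref xng j) with hδdef
  have hδ0 : ∀ j, 0 ≤ δ j := fun j => marg_nonneg hmono _ _
  have hkR : (0:ℝ) < (k:ℝ) := by exact_mod_cast hk
  have hfN : f N = ∑ j ∈ Finset.range n, δ j := by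
    have h := telescope f xng ∅ n
    simp only [Finset.empty_union, hnorm, zero_add] at h
    exact h
  have hfN0 : 0 ≤ f N := by rw [← hnorm]; exact hmono ∅ N (Finset.empty_subset N)
  -- key singleton bound
  have hkey : ∀ j < n, ∀ s ∈ Ss j, (k:ℝ) * marg f {s} N ≤ δ j := by
    intro j hj s hs
    obtain ⟨hxS, hxk, hopt⟩ := hng j hj
    have h1 : (k:ℝ) * marg f {s} (xng j ∪ pref xng j) ≤ δ j :=
      key_singleton hmono hsub hk hxS hxk hopt hs
    have h2 : marg f {s} N ≤ marg f {s} (xng j ∪ pref xng j) := by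
      apply marg_antitone hmono hsub
      rw [← pref_succ]
      exact pref_mono xng hj
    nlinarith
  -- cardinality / subset facts about z
  have hzcard : ∀ j < n, (zag j).card ≤ m ∧ zag j ⊆ Ss j := by
    intro j hj
    obtain ⟨zk, zr, hz, hzkS, hzkc, _, hzrS, hzrc⟩ := (hag j hj).2
    constructor
    · calc (zag j).card ≤ zk.card + zr.card := by rw [hz]; exact Finset.card_union_le _ _
        _ ≤ m := by omega
    · rw [hz]; exact Finset.union_subset hzkS hzrS
  have hselt : ∀ j < n, ∀ s ∈ zag j, (k:ℝ) * marg f {s} N ≤ δ j := fun j hj s hs =>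
    hkey j hj s ((hzcard j hj).2 hs)
  -- the borrowed parts
  set b : ℕ → Finset α := fun i => xag i \ Ss i with hbdef
  have hbxag : ∀ i, b i ⊆ xag i := fun i => Finset.sdiff_subset
  have hbsub : ∀ i < n, b i ⊆ pref zag i := by
    intro i hi s hsb
    rcases Finset.mem_sdiff.mp hsb with ⟨hsx, hsS⟩
    rcases Finset.mem_union.mp ((hag i hi).1.1 hsx) with h | h
    · exact absurd h hsS
    · exact h
  have hδ_le_fN : ∀ j < n, δ j ≤ f N := by
    intro j hj; rw [hfN]
    exact Finset.single_le_sum (fun i _ => hδ0 i) (Finset.mem_range.mpr hj)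
  -- per-element bound for borrowed elements
  have hsN : ∀ i < n, ∀ s ∈ b i, marg f {s} N ≤ f N / k := by
    intro i hi s hsb
    rcases Finset.mem_biUnion.mp (hbsub i hi hsb) with ⟨j, hjmem, hsz⟩
    have hj : j < n := lt_trans (Finset.mem_range.mp hjmem) hi
    have h1 := hselt j hj s hsz
    have h2 := hδ_le_fN j hj
    rw [le_div_iff₀ hkR]
    calc marg f {s} N * k = k * marg f {s} N := by ring
      _ ≤ δ j := h1
      _ ≤ f N := h2
  -- bound on each borrowed marginal (for the (n-1) bound)
  have hb_le : ∀ i < n, marg f (b i) (N ∪ pref xag i) ≤ f N := by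
    intro i hi
    calc marg f (b i) (N ∪ pref xag i) ≤ marg f (b i) N :=
          marg_antitone hmono hsub _ Finset.subset_union_left
      _ ≤ ∑ s ∈ b i, marg f {s} N := marg_le_sum hmono hsub _ _
      _ ≤ ∑ s ∈ b i, f N / k := Finset.sum_le_sum (fun s hs => hsN i hi s hs)
      _ = ((b i).card : ℝ) * (f N / k) := by rw [Finset.sum_const, nsmul_eq_mul]
      _ ≤ (k : ℝ) * (f N / k) := by
          apply mul_le_mul_of_nonneg_right _ (div_nonneg hfN0 hkR.le)
          exact_mod_cast le_trans (Finset.card_le_card (hbxag i)) (hag i hi).1.2.1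
      _ = f N := by field_simp
  have hb0 : marg f (b 0) (N ∪ pref xag 0) = 0 := by
    have hb0e : b 0 = ∅ := by
      apply Finset.subset_empty.mp
      have := hbsub 0 (by omega)
      simpa [pref] using this
    simp [hb0e, marg]
  -- bound 1 : T ≤ (n-1) f N
  have hT1 : ∑ i ∈ Finset.range n, marg f (b i) (N ∪ pref xag i) ≤ ((n:ℝ) - 1) * f N := by
    obtain ⟨n', rfl⟩ : ∃ n', n = n' + 1 := ⟨n - 1, by omega⟩
    rw [Finset.sum_range_succ', hb0, add_zero]
    calc ∑ i ∈ Finset.range n', marg f (b (i+1)) (N ∪ pref xag (i+1))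
        ≤ ∑ _i ∈ Finset.range n', f N :=
          Finset.sum_le_sum (fun i hi => hb_le (i+1) (by
            have := Finset.mem_range.mp hi; omega))
      _ = (n' : ℝ) * f N := by rw [Finset.sum_const, nsmul_eq_mul, Finset.card_range]
      _ ≤ (((n' + 1 : ℕ) : ℝ) - 1) * f N := by push_cast; ring_nf; exact le_rfl
  -- bound 2 : T ≤ (m/k) f N
  have hT2 : ∑ i ∈ Finset.range n, marg f (b i) (N ∪ pref xag i) ≤ (m:ℝ) / k * f N := by
    have step1 : ∀ i ∈ Finset.range n,
        marg f (b i) (N ∪ pref xag i) ≤ marg f (b i) (N ∪ pref b i) := by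
      intro i _
      apply marg_antitone hmono hsub
      exact Finset.union_subset_union_right (pref_subset_pref hbxag i)
    have step2 : ∑ i ∈ Finset.range n, marg f (b i) (N ∪ pref b i)
        = f (N ∪ pref b n) - f N := by
      have := telescope f b N n; linarith
    have step3 : f (N ∪ pref b n) - f N ≤ ∑ s ∈ pref b n, marg f {s} N := by
      have h := marg_le_sum hmono hsub (pref b n) N
      simpa [marg, Finset.union_comm] using h
    -- partition pref b n by first z-source
    set D : ℕ → Finset α := fun j => ((pref b n) ∩ zag j) \ pref zag j with hD
    have hBsub : pref b n ⊆ (Finset.range n).biUnion D := by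
      intro s hsB
      have hsz : s ∈ pref zag n := by
        rcases Finset.mem_biUnion.mp hsB with ⟨i, hi, hsi⟩
        exact pref_mono zag (le_of_lt (Finset.mem_range.mp hi)) (hbsub i (Finset.mem_range.mp hi) hsi)
      obtain ⟨j, hjr, hjz⟩ := Finset.mem_biUnion.mp hsz
      have hex : ∃ j', s ∈ zag j' := ⟨j, hjz⟩
      have hj0z : s ∈ zag (Nat.find hex) := Nat.find_spec hex
      have hj0n : Nat.find hex < n := by
        have := Nat.find_min' hex hjz
        have := Finset.mem_range.mp hjr
        omega
      refine Finset.mem_biUnion.mpr ⟨Nat.find hex, Finset.mem_range.mpr hj0n, ?_⟩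
      refine Finset.mem_sdiff.mpr ⟨Finset.mem_inter.mpr ⟨hsB, hj0z⟩, ?_⟩
      intro hcon
      rcases Finset.mem_biUnion.mp hcon with ⟨j', hj', hsj'⟩
      exact Nat.find_min hex (Finset.mem_range.mp hj') hsj'
    have hdisj : (↑(Finset.range n) : Set ℕ).PairwiseDisjoint D := by
      have key : ∀ j j' : ℕ, j < j' → Disjoint (D j) (D j') := by
        intro j j' hlt
        rw [Finset.disjoint_left]
        intro s hsj hsj'
        have h1 : s ∈ zag j := (Finset.mem_inter.mp (Finset.mem_sdiff.mp hsj).1).2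
        exact (Finset.mem_sdiff.mp hsj').2 (subset_pref zag hlt h1)
      intro j _ j' _ hne
      rcases lt_or_gt_of_ne hne with h | h
      · exact key j j' h
      · exact (key j' j h).symm
    have hsum_le : ∑ s ∈ pref b n, marg f {s} N
        ≤ ∑ j ∈ Finset.range n, ∑ s ∈ D j, marg f {s} N := by
      calc ∑ s ∈ pref b n, marg f {s} N
          ≤ ∑ s ∈ (Finset.range n).biUnion D, marg f {s} N :=
            Finset.sum_le_sum_of_subset_of_nonneg hBsub
              (fun s _ _ => marg_nonneg hmono _ _)
        _ = _ := Finset.sum_biUnion hdisj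
    have hDj : ∀ j ∈ Finset.range n, ∑ s ∈ D j, marg f {s} N ≤ (m:ℝ) / k * δ j := by
      intro j hj
      have hjn := Finset.mem_range.mp hj
      have hsub' : D j ⊆ zag j := fun s hs =>
        (Finset.mem_inter.mp (Finset.mem_sdiff.mp hs).1).2
      have hcard : (D j).card ≤ m := le_trans (Finset.card_le_card hsub') (hzcard j hjn).1
      calc ∑ s ∈ D j, marg f {s} N ≤ ∑ s ∈ D j, δ j / k := by
            apply Finset.sum_le_sum
            intro s hs
            have h1 := hselt j hjn s (hsub' hs)
            rw [le_div_iff₀ hkR]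
            calc marg f {s} N * k = k * marg f {s} N := by ring
              _ ≤ δ j := h1
        _ = ((D j).card : ℝ) * (δ j / k) := by rw [Finset.sum_const, nsmul_eq_mul]
        _ ≤ (m : ℝ) * (δ j / k) := by
            apply mul_le_mul_of_nonneg_right _ (div_nonneg (hδ0 j) hkR.le)
            exact_mod_cast hcard
        _ = (m:ℝ) / k * δ j := by ring
    calc ∑ i ∈ Finset.range n, marg f (b i) (N ∪ pref xag i)
        ≤ ∑ i ∈ Finset.range n, marg f (b i) (N ∪ pref b i) := Finset.sum_le_sum step1
      _ = f (N ∪ pref b n) - f N := step2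
      _ ≤ ∑ s ∈ pref b n, marg f {s} N := step3
      _ ≤ ∑ j ∈ Finset.range n, ∑ s ∈ D j, marg f {s} N := hsum_le
      _ ≤ ∑ j ∈ Finset.range n, (m:ℝ) / k * δ j := Finset.sum_le_sum hDj
      _ = (m:ℝ) / k * ∑ j ∈ Finset.range n, δ j := by rw [Finset.mul_sum]
      _ = (m:ℝ) / k * f N := by rw [hfN]
  -- a-part bound
  have haterm : ∀ i < n, marg f (xag i ∩ Ss i) (N ∪ pref xag i) ≤ δ i := by
    intro i hi
    obtain ⟨hxS, hxk, hopt⟩ := hng i hi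
    have h1 : marg f (xag i ∩ Ss i) (N ∪ pref xag i) ≤ marg f (xag i ∩ Ss i) (pref xng i) := by
      apply marg_antitone hmono hsub
      exact (pref_mono xng (le_of_lt hi)).trans Finset.subset_union_left
    have h2 : f ((xag i ∩ Ss i) ∪ pref xng i) ≤ f (xng i ∪ pref xng i) :=
      hopt _ Finset.inter_subset_right
        (le_trans (Finset.card_le_card Finset.inter_subset_left) (hag i hi).1.2.1)
    calc marg f (xag i ∩ Ss i) (N ∪ pref xag i)
        ≤ marg f (xag i ∩ Ss i) (pref xng i) := h1
      _ ≤ marg f (xng i) (pref xng i) := by simp only [marg]; linarith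
  -- split of each augmented marginal
  have hsplit : ∀ i ∈ Finset.range n, marg f (xag i) (N ∪ pref xag i)
      ≤ marg f (xag i ∩ Ss i) (N ∪ pref xag i) + marg f (b i) (N ∪ pref xag i) := by
    intro i _
    have hxeq : xag i = (xag i ∩ Ss i) ∪ b i := by
      ext a
      simp only [hbdef, Finset.mem_union, Finset.mem_inter, Finset.mem_sdiff]
      tauto
    nth_rewrite 1 [hxeq]
    exact marg_union_le hmono hsub _ _ _
  -- main assembly
  have hmain : f (N ∪ pref xag n) = f N + ∑ i ∈ Finset.range n, marg f (xag i) (N ∪ pref xag i) :=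
    telescope f xag N n
  have hA1 : f (pref xag n) ≤ f (N ∪ pref xag n) := hmono _ _ Finset.subset_union_right
  have hAsum : ∑ i ∈ Finset.range n, marg f (xag i ∩ Ss i) (N ∪ pref xag i) ≤ f N := by
    rw [hfN]
    exact Finset.sum_le_sum (fun i hi => haterm i (Finset.mem_range.mp hi))
  have hsplitsum := Finset.sum_le_sum hsplit
  rw [Finset.sum_add_distrib] at hsplitsum
  have hTmin : ∑ i ∈ Finset.range n, marg f (b i) (N ∪ pref xag i)
      ≤ min ((m:ℝ)/k) ((n:ℝ)-1) * f N := by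
    rcases le_total ((m:ℝ)/k) ((n:ℝ)-1) with h | h
    · rw [min_eq_left h]; exact hT2
    · rw [min_eq_right h]; exact hT1
  have hfinal : (2 + min ((m : ℝ) / k) ((n : ℝ) - 1)) * f N
      = f N + f N + min ((m : ℝ) / k) ((n : ℝ) - 1) * f N := by ring
  rw [hfinal]
  linarith
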